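/- Let h be a real random variable with law N(0, σ²), σ ≥ 0. Then the variance of max(h, 0) equals ((π − 1)/(2π)) σ². -/

import Mathlib

open MeasureTheory ProbabilityTheory Real Set Filter
open scoped Topology
open scoped NNReal
open scoped ENNReal

lemma aux_int_mul_exp {b : ℝ} (hb : 0 < b) :
    ∫ r in Ioi (0:ℝ), r * Real.exp (-b * r ^ 2) = (2 * b)⁻¹ := by
  have A : ∀ x ∈ Ici (0:ℝ), HasDerivAt (fun x : ℝ => -(2*b)⁻¹ * Real.exp (-b * x^2))
      (x * Real.exp (-b * x^2)) x := by
    intro x _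
    convert (((hasDerivAt_pow 2 x).const_mul (-b)).exp.const_mul (-(2*b)⁻¹)) using 1
    · rfl
    · rfl
    field_simp
    ring
  have B : Tendsto (fun x : ℝ => -(2*b)⁻¹ * Real.exp (-b * x^2)) atTop (𝓝 (-(2*b)⁻¹ * 0)) := by
    refine Tendsto.const_mul _ ?_
    refine Real.tendsto_exp_atBot.comp ?_
    exact (tendsto_pow_atTop two_ne_zero).const_mul_atTop_of_neg (neg_lt_zero.2 hb)
  have := integral_Ioi_of_hasDerivAt_of_tendsto' A
    (integrable_mul_exp_neg_mul_sq hb).integrableOn (by simpa using B)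
  simpa using this

lemma aux_integrableOn_sq_exp {b : ℝ} (hb : 0 < b) :
    IntegrableOn (fun x : ℝ => x^2 * Real.exp (-b * x^2)) (Ioi 0) := by
  have := integrableOn_rpow_mul_exp_neg_mul_sq hb (s := 2) (by norm_num)
  refine this.congr_fun (fun x hx => ?_) measurableSet_Ioi
  beta_reduce
  rw [Real.rpow_two]

lemma aux_int_sq_exp {b : ℝ} (hb : 0 < b) :
    ∫ r in Ioi (0:ℝ), r^2 * Real.exp (-b * r ^ 2) = (2 * b)⁻¹ * (Real.sqrt (π / b) / 2) := by
  have hu : ∀ x ∈ Ioi (0:ℝ), HasDerivAt (fun x : ℝ => x) (1 : ℝ) x := fun x _ => hasDerivAt_id x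
  have hv : ∀ x ∈ Ioi (0:ℝ), HasDerivAt (fun x : ℝ => -(2*b)⁻¹ * Real.exp (-b * x^2))
      (x * Real.exp (-b * x^2)) x := by
    intro x _
    convert (((hasDerivAt_pow 2 x).const_mul (-b)).exp.const_mul (-(2*b)⁻¹)) using 1
    · rfl
    · rfl
    field_simp
    ring
  have hint_sq : IntegrableOn (fun x : ℝ => x * (x * Real.exp (-b * x^2))) (Ioi 0) := by
    refine (aux_integrableOn_sq_exp hb).congr_fun (fun x hx => ?_) measurableSet_Ioi
    ring
  have hint_v : IntegrableOn (fun x : ℝ => (1:ℝ) * (-(2*b)⁻¹ * Real.exp (-b * x^2))) (Ioi 0) := by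
    exact (((integrable_exp_neg_mul_sq hb).const_mul (-(2*b)⁻¹)).const_mul 1).integrableOn
  have h_zero : Tendsto (fun x : ℝ => x * (-(2*b)⁻¹ * Real.exp (-b * x^2))) (𝓝[>] (0:ℝ))
      (𝓝 (0 : ℝ)) := by
    have : ContinuousAt (fun x : ℝ => x * (-(2*b)⁻¹ * Real.exp (-b * x^2))) 0 := by
      fun_prop
    have h0 : (fun x : ℝ => x * (-(2*b)⁻¹ * Real.exp (-b * x^2))) 0 = 0 := by simp
    have := this.continuousWithinAt (s := Ioi (0:ℝ))
    unfold ContinuousWithinAt at this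
    rwa [show (fun x : ℝ => x * (-(2*b)⁻¹ * Real.exp (-b * x^2))) 0 = 0 from h0] at this
  have h_infty : Tendsto (fun x : ℝ => x * (-(2*b)⁻¹ * Real.exp (-b * x^2))) atTop
      (𝓝 (0 : ℝ)) := by
    have h1 : Tendsto (fun x : ℝ => x * Real.exp (-b * x^2)) atTop (𝓝 0) := by
      have hlo := rpow_mul_exp_neg_mul_sq_isLittleO_exp_neg hb 1
      have hexp : Tendsto (fun x : ℝ => Real.exp (-(1/2) * x)) atTop (𝓝 0) := by
        refine Real.tendsto_exp_atBot.comp ?_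
        exact tendsto_id.const_mul_atTop_of_neg (by norm_num)
      have := hlo.isBigO.trans_tendsto hexp
      refine this.congr' ?_
      filter_upwards [eventually_gt_atTop (0:ℝ)] with x hx
      rw [Real.rpow_one]
    have := h1.const_mul (-(2*b)⁻¹)
    simpa [mul_comm, mul_left_comm, mul_assoc] using this
  have key := integral_Ioi_mul_deriv_eq_deriv_mul hu hv hint_sq hint_v h_zero h_infty
  rw [show ∫ x in Ioi (0:ℝ), x * (x * Real.exp (-b * x^2))
      = ∫ r in Ioi (0:ℝ), r^2 * Real.exp (-b * r ^ 2) from by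
      refine setIntegral_congr_fun measurableSet_Ioi (fun x _ => ?_); ring] at key
  rw [key]
  have : ∫ x in Ioi (0:ℝ), (1:ℝ) * (-(2*b)⁻¹ * Real.exp (-b * x^2))
      = -(2*b)⁻¹ * (Real.sqrt (π / b) / 2) := by
    simp_rw [one_mul]
    rw [integral_const_mul, integral_gaussian_Ioi]
  rw [this]
  ring

lemma aux_gaussianPDF_eq (v : ℝ≥0) :
    gaussianPDF 0 v = fun x => ((gaussianPDFReal 0 v x).toNNReal : ℝ≥0∞) := rfl

lemma aux_gauss_integral_eq {v : ℝ≥0} (hv : v ≠ 0) (g : ℝ → ℝ) :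
    ∫ x, g x ∂(gaussianReal 0 v) = ∫ x, gaussianPDFReal 0 v x * g x := by
  rw [gaussianReal_of_var_ne_zero _ hv, aux_gaussianPDF_eq,
    integral_withDensity_eq_integral_smul ((measurable_gaussianPDFReal 0 v).real_toNNReal) g]
  refine integral_congr_ae (Filter.Eventually.of_forall fun x => ?_)
  show (gaussianPDFReal 0 v x).toNNReal • g x = gaussianPDFReal 0 v x * g x
  rw [NNReal.smul_def, smul_eq_mul, Real.coe_toNNReal _ (gaussianPDFReal_nonneg 0 v x)]

lemma aux_gauss_integrable_iff {v : ℝ≥0} (hv : v ≠ 0) (g : ℝ → ℝ) :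
    Integrable g (gaussianReal 0 v)
      ↔ Integrable (fun x => gaussianPDFReal 0 v x * g x) volume := by
  rw [gaussianReal_of_var_ne_zero _ hv, aux_gaussianPDF_eq,
    integrable_withDensity_iff_integrable_smul ((measurable_gaussianPDFReal 0 v).real_toNNReal)]
  refine integrable_congr (Filter.Eventually.of_forall fun x => ?_)
  show (gaussianPDFReal 0 v x).toNNReal • g x = gaussianPDFReal 0 v x * g x
  rw [NNReal.smul_def, smul_eq_mul, Real.coe_toNNReal _ (gaussianPDFReal_nonneg 0 v x)]

/-- For `h ~ N(0, σ²)`, the variance of the ReLU output is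
`Var[max(h, 0)] = ((π − 1)/(2π)) σ²`. -/
theorem relu_of_gaussian_variance
    {Ω : Type*} [MeasureSpace Ω] [IsProbabilityMeasure (ℙ : Measure Ω)]
    (σ : ℝ≥0) (h : Ω → ℝ) (h_meas : Measurable h)
    (h_law : Measure.map h ℙ = gaussianReal 0 (σ ^ 2)) :
    variance (fun ω => max (h ω) 0) ℙ
      = (Real.pi - 1) / (2 * Real.pi) * (σ : ℝ) ^ 2 := by
  have haesm : AEStronglyMeasurable (fun x : ℝ => max x 0) (Measure.map h ℙ) :=
    (continuous_id.max continuous_const).aestronglyMeasurable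
  have haesm_sq : AEStronglyMeasurable (fun x : ℝ => (max x 0)^2) (Measure.map h ℙ) :=
    ((continuous_id.max continuous_const).pow 2).aestronglyMeasurable
  rcases eq_or_ne σ 0 with hσ | hσ
  · -- degenerate case: the law is a Dirac mass at 0
    subst hσ
    have hlaw0 : Measure.map h ℙ = Measure.dirac 0 := by
      rw [h_law]
      norm_num
    have h0 : ∀ᵐ ω ∂ℙ, h ω = 0 := by
      rw [ae_iff]
      have : {ω | ¬ h ω = 0} = h ⁻¹' ({0}ᶜ) := rfl
      rw [this, ← Measure.map_apply h_meas (measurableSet_singleton (0:ℝ)).compl, hlaw0]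
      simp
    have hX0 : (fun ω => max (h ω) 0) =ᵐ[ℙ] (fun _ => (0:ℝ)) := by
      filter_upwards [h0] with ω hω
      simp [hω]
    have hmem : MemLp (fun ω => max (h ω) 0) 2 ℙ :=
      (memLp_const (0:ℝ)).ae_eq hX0.symm
    rw [variance_eq_sub hmem]
    have h1 : ∫ ω, ((fun ω => max (h ω) 0) ^ 2) ω ∂ℙ = 0 := by
      rw [integral_congr_ae (g := fun _ => (0:ℝ)) ?_]
      · simp
      · filter_upwards [hX0] with ω hω
        simp only [Pi.pow_apply, hω]
        simp
    have h2 : ∫ ω, max (h ω) 0 ∂ℙ = 0 := by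
      rw [integral_congr_ae hX0]
      simp
    simp only [h1, h2]
    norm_num
  · -- main case
    have hv : (σ : ℝ≥0) ^ 2 ≠ 0 := pow_ne_zero _ hσ
    set vR : ℝ := (σ : ℝ)^2 with hvR_def
    have hvR_pos : 0 < vR := by positivity
    have hcoe : ((σ ^ 2 : ℝ≥0) : ℝ) = vR := by push_cast; rfl
    set b : ℝ := (2 * vR)⁻¹ with hb_def
    have hb : 0 < b := by positivity
    set c : ℝ := (Real.sqrt (2 * π * vR))⁻¹ with hc_def
    have hs_pos : 0 < Real.sqrt (2 * π * vR) := Real.sqrt_pos.2 (by positivity)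
    have hpdf : ∀ x : ℝ, gaussianPDFReal 0 (σ^2) x = c * Real.exp (-b * x^2) := by
      intro x
      rw [gaussianPDFReal, hcoe, sub_zero]
      congr 1
      rw [hb_def, neg_div, div_eq_mul_inv]
      ring_nf
    -- the two moments
    have hind_sq : (fun x : ℝ => gaussianPDFReal 0 (σ^2) x * (max x 0)^2)
        = (Ioi (0:ℝ)).indicator (fun x => c * (x^2 * Real.exp (-b * x^2))) := by
      funext x
      by_cases hx : 0 < x
      · rw [Set.indicator_of_mem (Set.mem_Ioi.mpr hx), hpdf x, max_eq_left hx.le]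
        ring
      · rw [Set.indicator_of_notMem (by simpa using hx), max_eq_right (not_lt.1 hx)]
        simp
    have hind_one : (fun x : ℝ => gaussianPDFReal 0 (σ^2) x * max x 0)
        = (Ioi (0:ℝ)).indicator (fun x => c * (x * Real.exp (-b * x^2))) := by
      funext x
      by_cases hx : 0 < x
      · rw [Set.indicator_of_mem (Set.mem_Ioi.mpr hx), hpdf x, max_eq_left hx.le]
        ring
      · rw [Set.indicator_of_notMem (by simpa using hx), max_eq_right (not_lt.1 hx)]
        simp
    have hint_sq : Integrable (fun x : ℝ => (max x 0)^2) (gaussianReal 0 (σ^2)) := by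
      rw [aux_gauss_integrable_iff hv, hind_sq]
      exact IntegrableOn.integrable_indicator ((aux_integrableOn_sq_exp hb).const_mul c) measurableSet_Ioi
    have hM2 : ∫ x, (max x 0)^2 ∂(gaussianReal 0 (σ^2)) = vR / 2 := by
      rw [aux_gauss_integral_eq hv, hind_sq, integral_indicator measurableSet_Ioi,
        integral_const_mul, aux_int_sq_exp hb]
      have h2b : (2 * b)⁻¹ = vR := by
        rw [hb_def]
        field_simp
      have hpib : π / b = 2 * π * vR := by
        rw [hb_def]
        field_simp
      rw [h2b, hpib, hc_def]
      field_simp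
    have hM1 : ∫ x, max x 0 ∂(gaussianReal 0 (σ^2)) = c * vR := by
      rw [aux_gauss_integral_eq hv, hind_one, integral_indicator measurableSet_Ioi,
        integral_const_mul, aux_int_mul_exp hb]
      have h2b : (2 * b)⁻¹ = vR := by
        rw [hb_def]
        field_simp
      rw [h2b]
    -- MemLp of the ReLU output
    have hmem_g : MemLp (fun x : ℝ => max x 0) 2 (gaussianReal 0 (σ^2)) := by
      refine (memLp_two_iff_integrable_sq ?_).2 hint_sq
      exact (continuous_id'.max continuous_const).aestronglyMeasurable
    have hmem : MemLp (fun ω => max (h ω) 0) 2 ℙ := by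
      have := (memLp_map_measure_iff haesm h_meas.aemeasurable).1 (by rwa [h_law])
      exact this
    rw [variance_eq_sub hmem]
    have key2 : ∫ ω, ((fun ω => max (h ω) 0) ^ 2) ω ∂ℙ = vR / 2 := by
      simp only [Pi.pow_apply]
      have := integral_map h_meas.aemeasurable haesm_sq
      rw [h_law, hM2] at this
      exact this.symm
    have key1 : ∫ ω, max (h ω) 0 ∂ℙ = c * vR := by
      have := integral_map h_meas.aemeasurable haesm
      rw [h_law, hM1] at this
      exact this.symm
    rw [key2, key1]
    have hsq : (Real.sqrt (2 * π * vR))^2 = 2 * π * vR := Real.sq_sqrt (by positivity)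
    have hpi : (π : ℝ) ≠ 0 := Real.pi_ne_zero
    rw [hc_def]
    rw [mul_pow, inv_pow, hsq]
    field_simp
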